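/- Let R be a ring and M a semisimple right R-module. Then the following are equivalent: (1) M is endonoetherian; (2) M is endoartinian; (3) M has finite length (i.e., M is both a noetherian and an artinian R-module). -/

import Mathlib

/-- A module `M` over a ring `S` is *endoartinian* if every descending chain of images of
module endomorphisms of `M` stabilizes.  (A right `R`-module is treated as a module over
`Rᵐᵒᵖ`.) -/
def IsEndoartinian (S M : Type*) [Ring S] [AddCommGroup M] [Module S M] : Prop :=
  ∀ f : ℕ → M →ₗ[S] M,
    (∀ n, LinearMap.range (f (n + 1)) ≤ LinearMap.range (f n)) →
    ∃ n, ∀ k, n ≤ k → LinearMap.range (f k) = LinearMap.range (f n)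

/-- A module `M` over a ring `S` is *endonoetherian* if every ascending chain of kernels of
module endomorphisms of `M` stabilizes. -/
def IsEndonoetherian (S M : Type*) [Ring S] [AddCommGroup M] [Module S M] : Prop :=
  ∀ f : ℕ → M →ₗ[S] M,
    (∀ n, LinearMap.ker (f n) ≤ LinearMap.ker (f (n + 1))) →
    ∃ n, ∀ k, n ≤ k → LinearMap.ker (f k) = LinearMap.ker (f n)

section Aux

variable {S M : Type*} [Ring S] [AddCommGroup M] [Module S M]

/-- In a semisimple module, every submodule is the kernel of an endomorphism. -/
lemma exists_endo_ker_eq (hss : IsSemisimpleModule S M) (N : Submodule S M) :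
    ∃ f : M →ₗ[S] M, LinearMap.ker f = N := by
  have : IsSemisimpleModule S M := hss
  obtain ⟨p, hp⟩ := exists_isCompl N
  refine ⟨p.subtype.comp (Submodule.linearProjOfIsCompl p N hp.symm), ?_⟩
  rw [LinearMap.ker_comp, Submodule.ker_subtype]
  exact Submodule.linearProjOfIsCompl_ker hp.symm

/-- In a semisimple module, every submodule is the range of an endomorphism. -/
lemma exists_endo_range_eq (hss : IsSemisimpleModule S M) (N : Submodule S M) :
    ∃ f : M →ₗ[S] M, LinearMap.range f = N := by
  have : IsSemisimpleModule S M := hss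
  obtain ⟨p, hp⟩ := exists_isCompl N
  refine ⟨N.subtype.comp (Submodule.projectionOnto N p hp), ?_⟩
  rw [LinearMap.range_comp, Submodule.range_projectionOnto, Submodule.map_subtype_top]

end Aux

/-- For a semisimple right `R`-module `M`, being endonoetherian, being endoartinian and
having finite length (being both noetherian and artinian) are equivalent. -/
theorem semisimple_endo_chain_conditions_iff_finite_length (R M : Type*) [Ring R]
    [AddCommGroup M] [Module Rᵐᵒᵖ M] (hss : IsSemisimpleModule Rᵐᵒᵖ M) :
    (IsEndonoetherian Rᵐᵒᵖ M ↔ (IsNoetherian Rᵐᵒᵖ M ∧ IsArtinian Rᵐᵒᵖ M)) ∧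
    (IsEndoartinian Rᵐᵒᵖ M ↔ (IsNoetherian Rᵐᵒᵖ M ∧ IsArtinian Rᵐᵒᵖ M)) := by
  have : IsSemisimpleModule Rᵐᵒᵖ M := hss
  have tfae := IsSemisimpleModule.finite_tfae (R := Rᵐᵒᵖ) (M := M)
  have noeth_art : IsNoetherian Rᵐᵒᵖ M ↔ IsArtinian Rᵐᵒᵖ M := tfae.out 1 2
  constructor
  · constructor
    · intro h
      suffices hn : IsNoetherian Rᵐᵒᵖ M from ⟨hn, noeth_art.mp hn⟩
      rw [← monotone_stabilizes_iff_noetherian]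
      intro c
      choose f hf using fun n => exists_endo_ker_eq hss (c n)
      obtain ⟨n, hn⟩ := h f (fun n => by
        rw [hf, hf]; exact c.monotone (Nat.le_succ n))
      exact ⟨n, fun m hm => by rw [← hf, ← hf, hn m hm]⟩
    · rintro ⟨hn, -⟩
      intro f hf
      obtain ⟨n, hn'⟩ := monotone_stabilizes_iff_noetherian.mpr hn
        ⟨fun n => LinearMap.ker (f n), monotone_nat_of_le_succ hf⟩
      exact ⟨n, fun k hk => (hn' k hk).symm⟩
  · constructor
    · intro h
      suffices ha : IsArtinian Rᵐᵒᵖ M from ⟨noeth_art.mpr ha, ha⟩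
      rw [← monotone_stabilizes_iff_artinian]
      intro c
      choose f hf using fun n => exists_endo_range_eq hss (OrderDual.ofDual (c n))
      obtain ⟨n, hn⟩ := h f (fun n => by
        rw [hf, hf]; exact c.monotone (Nat.le_succ n))
      exact ⟨n, fun m hm => by
        have := hn m hm
        rw [hf, hf] at this
        exact (OrderDual.ofDual_inj.mp this.symm)⟩
    · rintro ⟨-, ha⟩
      intro f hf
      obtain ⟨n, hn'⟩ := monotone_stabilizes_iff_artinian.mpr ha
        ⟨fun n => OrderDual.toDual (LinearMap.range (f n)), monotone_nat_of_le_succ hf⟩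
      exact ⟨n, fun k hk => by
        have := hn' k hk
        exact (OrderDual.toDual_inj.mp this).symm⟩
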